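/- For any three-times continuously differentiable functions L_{abc} : ℝ³ → ℝ (indices a,b,c ∈ {1,2,3}) satisfying the antisymmetry L_{abc} = −L_{bac}, the following identity holds at every point of ℝ³: ∂₃∂₃F₁₂₁₂ + ∂₂∂₂F₁₃₁₃ + ∂₁∂₁F₂₃₂₃ − 2∂₁∂₂F₁₃₂₃ − 2∂₂∂₃F₁₂₁₃ + 2∂₁∂₃F₁₂₂₃ = 0, where F_{abcd} := ∂_d L_{abc} − ∂_c L_{abd} + ∂_b L_{cda} − ∂_a L_{cdb}. (This is the cancellation of all third-order derivative terms in the integrability condition I = f_{1212,33} + f_{1313,22} + f_{2323,11} − 2 f_{1323,12} − 2 f_{1213,23} + 2 f_{1223,13} of the 3-dimensional Riemann-Lanczos problem.) -/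

import Mathlib

/-- Partial derivative of `f : ℝ³ → ℝ` with respect to the `i`-th coordinate,
taken as the derivative along the corresponding coordinate line. -/
noncomputable def pd (i : Fin 3) (f : (Fin 3 → ℝ) → ℝ) : (Fin 3 → ℝ) → ℝ :=
  fun x => deriv (fun t => f (Function.update x i t)) (x i)

/-- The flat-space Riemann-Lanczos expression
`F_{abcd} = ∂_d L_{abc} − ∂_c L_{abd} + ∂_b L_{cda} − ∂_a L_{cdb}`. -/
noncomputable def RLF (L : Fin 3 → Fin 3 → Fin 3 → (Fin 3 → ℝ) → ℝ)
    (a b c d : Fin 3) : (Fin 3 → ℝ) → ℝ :=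
  fun x => pd d (L a b c) x - pd c (L a b d) x + pd b (L c d a) x - pd a (L c d b) x


lemma line_hasDerivAt {f : (Fin 3 → ℝ) → ℝ} {x : Fin 3 → ℝ} (i : Fin 3)
    (hf : DifferentiableAt ℝ f x) :
    HasDerivAt (fun t => f (Function.update x i t)) (fderiv ℝ f x (Pi.single i 1)) (x i) := by
  have h2 : HasFDerivAt f (fderiv ℝ f x) (Function.update x i (x i)) := by
    rw [Function.update_eq_self]; exact hf.hasFDerivAt
  exact h2.comp_hasDerivAt (x i) (hasDerivAt_update x i (x i))

lemma pd_apply {f : (Fin 3 → ℝ) → ℝ} {x : Fin 3 → ℝ} (i : Fin 3)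
    (hf : DifferentiableAt ℝ f x) :
    pd i f x = fderiv ℝ f x (Pi.single i 1) :=
  (line_hasDerivAt i hf).deriv

lemma pd_contDiff {f : (Fin 3 → ℝ) → ℝ} {n : ℕ∞} (i : Fin 3)
    (hf : ContDiff ℝ (n + 1) f) : ContDiff ℝ n (pd i f) := by
  have hd : Differentiable ℝ f := hf.differentiable (by simp)
  have : pd i f = fun x => fderiv ℝ f x (Pi.single i 1) :=
    funext fun x => pd_apply i (hd x)
  rw [this]
  exact (hf.fderiv_right le_rfl).clm_apply contDiff_const

lemma pd_comm {f : (Fin 3 → ℝ) → ℝ} (hf : ContDiff ℝ 2 f) (i j : Fin 3) (x : Fin 3 → ℝ) :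
    pd i (pd j f) x = pd j (pd i f) x := by
  have hd : Differentiable ℝ f := hf.differentiable (by norm_num)
  have hfd : ContDiff ℝ 1 (fderiv ℝ f) := hf.fderiv_right (by norm_num)
  have key : ∀ u v : Fin 3,
      pd u (pd v f) x = fderiv ℝ (fderiv ℝ f) x (Pi.single u 1) (Pi.single v 1) := by
    intro u v
    have h1 : pd v f = fun y => fderiv ℝ f y (Pi.single v 1) :=
      funext fun y => pd_apply v (hd y)
    rw [h1, pd_apply u ((hfd.clm_apply contDiff_const).differentiable one_ne_zero x)]
    rw [fderiv_clm_apply (hfd.differentiable one_ne_zero x) (differentiableAt_const _)]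
    simp
  rw [key i j, key j i]
  exact (hf.contDiffAt.isSymmSndFDerivAt (by norm_num)) _ _

lemma pd_comb (i : Fin 3) {f g h k : (Fin 3 → ℝ) → ℝ}
    (hf : Differentiable ℝ f) (hg : Differentiable ℝ g)
    (hh : Differentiable ℝ h) (hk : Differentiable ℝ k) (x : Fin 3 → ℝ) :
    pd i (fun y => f y - g y + h y - k y) x
      = pd i f x - pd i g x + pd i h x - pd i k x := by
  have Df := (line_hasDerivAt i (hf x)).differentiableAt
  have Dg := (line_hasDerivAt i (hg x)).differentiableAt
  have Dh := (line_hasDerivAt i (hh x)).differentiableAt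
  have Dk := (line_hasDerivAt i (hk x)).differentiableAt
  simp only [pd]
  rw [deriv_fun_sub (show DifferentiableAt ℝ (fun t => f (Function.update x i t) - g (Function.update x i t)
      + h (Function.update x i t)) (x i) from (Df.sub Dg).add Dh) Dk,
    deriv_fun_add (show DifferentiableAt ℝ (fun t => f (Function.update x i t)
      - g (Function.update x i t)) (x i) from Df.sub Dg) Dh, deriv_fun_sub Df Dg]

section
variable {L : Fin 3 → Fin 3 → Fin 3 → (Fin 3 → ℝ) → ℝ}

lemma pd_pd_RLF (hC : ∀ a b c, ContDiff ℝ 3 (L a b c))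
    (i j a b c d : Fin 3) (x : Fin 3 → ℝ) :
    pd i (pd j (RLF L a b c d)) x
      = pd i (pd j (pd d (L a b c))) x - pd i (pd j (pd c (L a b d))) x
        + pd i (pd j (pd b (L c d a))) x - pd i (pd j (pd a (L c d b))) x := by
  have h3 : ∀ p q r, ContDiff ℝ (2 + 1 : ℕ∞) (L p q r) := fun p q r => by
    exact_mod_cast hC p q r
  have h2 : ∀ p q r (u : Fin 3), ContDiff ℝ (1 + 1 : ℕ∞) (pd u (L p q r)) := fun p q r u => by
    exact_mod_cast pd_contDiff u (h3 p q r)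
  have hd2 : ∀ p q r (u : Fin 3), Differentiable ℝ (pd u (L p q r)) := fun p q r u =>
    (h2 p q r u).differentiable (by norm_num)
  have hd1 : ∀ p q r (u v : Fin 3), Differentiable ℝ (pd u (pd v (L p q r))) :=
    fun p q r u v => (pd_contDiff u (h2 p q r v)).differentiable (by simp)
  have h1 : pd j (RLF L a b c d) = fun y =>
      pd j (pd d (L a b c)) y - pd j (pd c (L a b d)) y
        + pd j (pd b (L c d a)) y - pd j (pd a (L c d b)) y := by
    funext y
    exact pd_comb j (hd2 a b c d) (hd2 a b d c) (hd2 c d a b) (hd2 c d b a) y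
  rw [h1]
  exact pd_comb i (hd1 a b c j d) (hd1 a b d j c) (hd1 c d a j b) (hd1 c d b j a) x

lemma pdB {f : (Fin 3 → ℝ) → ℝ} (hf : ContDiff ℝ 3 f) (i j k : Fin 3) (x : Fin 3 → ℝ) :
    pd i (pd j (pd k f)) x = pd i (pd k (pd j f)) x := by
  have : pd j (pd k f) = pd k (pd j f) :=
    funext fun y => pd_comm (hf.of_le (by norm_num)) j k y
  rw [this]

lemma pdA {f : (Fin 3 → ℝ) → ℝ} (hf : ContDiff ℝ 3 f) (i j k : Fin 3) (x : Fin 3 → ℝ) :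
    pd i (pd j (pd k f)) x = pd j (pd i (pd k f)) x := by
  have h2 : ContDiff ℝ (2 + 1 : ℕ∞) f := by exact_mod_cast hf
  exact pd_comm (pd_contDiff k h2) i j x

lemma pdD {f : (Fin 3 → ℝ) → ℝ} (hf : ContDiff ℝ 3 f) (i j k : Fin 3) (x : Fin 3 → ℝ) :
    pd i (pd j (pd k f)) x = pd k (pd i (pd j f)) x :=
  (pdB hf i j k x).trans (pdA hf i k j x)

end

/-- All third-order derivative terms cancel in the integrability condition
`I = f_{1212,33} + f_{1313,22} + f_{2323,11} − 2 f_{1323,12} − 2 f_{1213,23} + 2 f_{1223,13}`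
of the 3-dimensional Riemann-Lanczos problem.  Index `i ∈ {1,2,3}` of the paper
corresponds to `i - 1 : Fin 3`. -/
theorem riemann_lanczos_3d_identity
    (L : Fin 3 → Fin 3 → Fin 3 → (Fin 3 → ℝ) → ℝ)
    (hC : ∀ a b c, ContDiff ℝ 3 (L a b c))
    (hA : ∀ a b c x, L a b c x = - L b a c x) :
    ∀ x : Fin 3 → ℝ,
      pd 2 (pd 2 (RLF L 0 1 0 1)) x + pd 1 (pd 1 (RLF L 0 2 0 2)) x
        + pd 0 (pd 0 (RLF L 1 2 1 2)) x
        - 2 * pd 0 (pd 1 (RLF L 0 2 1 2)) x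
        - 2 * pd 1 (pd 2 (RLF L 0 1 0 2)) x
        + 2 * pd 0 (pd 2 (RLF L 0 1 1 2)) x = 0 := by
  intro x
  rw [pd_pd_RLF hC 2 2 0 1 0 1 x, pd_pd_RLF hC 1 1 0 2 0 2 x, pd_pd_RLF hC 0 0 1 2 1 2 x,
    pd_pd_RLF hC 0 1 0 2 1 2 x, pd_pd_RLF hC 1 2 0 1 0 2 x, pd_pd_RLF hC 0 2 0 1 1 2 x]
  rw [pdD (hC 0 1 0) 2 2 1 x, pdD (hC 0 1 1) 2 2 0 x, pdD (hC 0 2 2) 1 1 0 x,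
    pdB (hC 1 2 2) 0 1 0 x, pdD (hC 0 1 2) 1 2 0 x, pdB (hC 0 2 0) 1 2 1 x,
    pdD (hC 0 2 1) 1 2 0 x, pdB (hC 0 1 2) 0 2 1 x, pdB (hC 1 2 0) 0 2 1 x,
    pdB (hC 1 2 1) 0 2 0 x]
  ring
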